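/- Let (V, E, o, t, inv) be a finite multigraph with ν = #V, let m : E → ℝ^d and φ : E → ℝ be 1-forms, and Q : V → ℝ. For θ ∈ ℝ^d set H_φ(θ) = Δ_{m,φ}(θ) + Q and H_0(θ) = Δ_{m,0}(θ) + Q, with eigenvalues λ_{φ,1}(θ) ≤ … ≤ λ_{φ,ν}(θ) and λ_{0,1}(θ) ≤ … ≤ λ_{0,ν}(θ). Define the band edges λ_{φ,n}^+ = sup_θ λ_{φ,n}(θ), λ_{φ,n}^- = inf_θ λ_{φ,n}(θ), and similarly λ_{0,n}^±. Let X(θ) = Δ_{m,φ}(θ) − Δ_{m,0}(θ) (a Hermitian operator), Λ₁ = inf_θ (smallest eigenvalue of X(θ)) and Λ_ν = sup_θ (largest eigenvalue of X(θ)). Then for every n ∈ {1,…,ν}: Λ₁ ≤ λ_{φ,n}^+ − λ_{0,n}^+ ≤ Λ_ν and Λ₁ ≤ λ_{φ,n}^- − λ_{0,n}^- ≤ Λ_ν. (Paper: Theorem 2.6, inequality (emf1), at the level of fiber operators.) -/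

import Mathlib

open scoped Classical
open Finset

noncomputable section

/-- The degree of a vertex: the number of oriented edges starting at it. -/
def mdeg {V E : Type} [Fintype E] (o : E → V) (v : V) : ℕ :=
  (Finset.univ.filter fun e => o e = v).card

/-- The combinatorial magnetic Laplacian `Δ_α`. -/
def magLap {V E : Type} [Fintype E] (o t : E → V) (α : E → ℝ)
    (f : V → ℂ) (v : V) : ℂ :=
  ∑ e ∈ Finset.univ.filter (fun e => o e = v),
    (f v - Complex.exp (Complex.I * (α e : ℂ)) * f (t e))

/-- The fiber magnetic Laplacian `Δ_{m,φ}(θ)`. -/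
def fiberLap {V E : Type} [Fintype E] {d : ℕ} (o t : E → V)
    (m : E → Fin d → ℝ) (φ : E → ℝ) (θ : Fin d → ℝ) (f : V → ℂ) (v : V) : ℂ :=
  (mdeg o v : ℂ) * f v -
    ∑ e ∈ Finset.univ.filter (fun e => o e = v),
      Complex.exp (Complex.I * ((φ e + ∑ i, m e i * θ i : ℝ) : ℂ)) * f (t e)

/-- Standard inner product on `ℂ^V` (conjugate-linear in the first argument). -/
def dotC {V : Type} [Fintype V] (f g : V → ℂ) : ℂ :=
  ∑ v, (starRingEnd ℂ) (f v) * g v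

/-- `lam` lists the eigenvalues of the operator `T` on `ℂ^V` in nondecreasing
order, counted with multiplicity (witnessed by an orthonormal eigenbasis). -/
def IsEigList {V : Type} [Fintype V] (T : (V → ℂ) → (V → ℂ))
    (lam : Fin (Fintype.card V) → ℝ) : Prop :=
  Monotone lam ∧ ∃ u : Fin (Fintype.card V) → (V → ℂ),
    (∀ i j, dotC (u i) (u j) = if i = j then (1 : ℂ) else 0) ∧
    ∀ i, T (u i) = fun v => ((lam i : ℝ) : ℂ) * u i v

/-- A closed walk in the multigraph. -/
def IsClosedWalk {V E : Type} (o t : E → V) {k : ℕ} (c : Fin (k + 1) → E) : Prop :=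
  (∀ i : Fin k, t (c i.castSucc) = o (c i.succ)) ∧ t (c (Fin.last k)) = o (c 0)

/-- Two forms have the same flux along every closed walk. -/
def SameFlux {V E W : Type} [AddCommMonoid W] (o t : E → V) (b b' : E → W) : Prop :=
  ∀ (k : ℕ) (c : Fin (k + 1) → E), IsClosedWalk o t c →
    ∑ i, b (c i) = ∑ i, b' (c i)

/-- Connectivity of the multigraph: any two distinct vertices are the endpoints
of some walk. -/
def MGConnected {V E : Type} (o t : E → V) : Prop :=
  ∀ u v : V, u ≠ v → ∃ (k : ℕ) (c : Fin (k + 1) → E),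
    (∀ i : Fin k, t (c i.castSucc) = o (c i.succ)) ∧ o (c 0) = u ∧ t (c (Fin.last k)) = v

/-- The set of fluxes of a form along all closed walks. -/
def fluxSet {V E W : Type} [AddCommMonoid W] (o t : E → V) (b : E → W) : Set W :=
  {w | ∃ (k : ℕ) (c : Fin (k + 1) → E), IsClosedWalk o t c ∧ ∑ i, b (c i) = w}

/-- The number of oriented edges in the support of a form. -/
def suppCard {E : Type} [Fintype E] {W : Type} [Zero W] (b : E → W) : ℕ :=
  (Finset.univ.filter fun e => b e ≠ 0).card

/-- The integer lattice `ℤ^d` inside `ℝ^d`. -/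
def intLattice (d : ℕ) : Set (Fin d → ℝ) :=
  {w | ∀ i, ∃ z : ℤ, w i = (z : ℝ)}

section DotC

variable {V : Type} [Fintype V]

lemma dotC_self_re (f : V → ℂ) : (dotC f f).re = ∑ v, Complex.normSq (f v) := by
  simp [dotC, ← Complex.normSq_eq_conj_mul_self, Complex.re_sum]

lemma dotC_self_re_pos {f : V → ℂ} (hf : f ≠ 0) : 0 < (dotC f f).re := by
  rw [dotC_self_re]
  have h1 : ∃ v, f v ≠ 0 := by
    by_contra h
    push_neg at h
    exact hf (funext h)
  obtain ⟨v, hv⟩ := h1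
  have : 0 < Complex.normSq (f v) := Complex.normSq_pos.mpr hv
  exact lt_of_lt_of_le this (Finset.single_le_sum (fun i _ => Complex.normSq_nonneg _)
    (Finset.mem_univ v))

lemma dotC_sub_right (f a b : V → ℂ) :
    dotC f a - dotC f b = dotC f (fun v => a v - b v) := by
  simp [dotC, mul_sub, Finset.sum_sub_distrib]

lemma dotC_sum_smul_left {ι : Type*} (u : ι → V → ℂ) (s : Finset ι) (c : ι → ℂ) (g : V → ℂ) :
    dotC (∑ i ∈ s, c i • u i) g = ∑ i ∈ s, (starRingEnd ℂ) (c i) * dotC (u i) g := by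
  simp only [dotC, Finset.sum_apply, Pi.smul_apply, smul_eq_mul, map_sum, map_mul,
    Finset.sum_mul, Finset.mul_sum]
  rw [Finset.sum_comm]
  congr 1; ext v; congr 1; ext i; ring

lemma dotC_sum_smul_right {ι : Type*} (u : ι → V → ℂ) (s : Finset ι) (c : ι → ℂ) (g : V → ℂ) :
    dotC g (∑ i ∈ s, c i • u i) = ∑ i ∈ s, c i * dotC g (u i) := by
  simp only [dotC, Finset.sum_apply, Pi.smul_apply, smul_eq_mul, Finset.mul_sum]
  rw [Finset.sum_comm]
  congr 1; ext v; congr 1; ext i; ring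

lemma dotC_expand {ι : Type*} [DecidableEq ι] {u : ι → V → ℂ}
    (hON : ∀ i j, dotC (u i) (u j) = if i = j then (1 : ℂ) else 0)
    (s : Finset ι) (c d : ι → ℂ) :
    dotC (∑ i ∈ s, c i • u i) (∑ i ∈ s, d i • u i)
      = ∑ i ∈ s, (starRingEnd ℂ) (c i) * d i := by
  rw [dotC_sum_smul_left]
  refine Finset.sum_congr rfl fun i hi => ?_
  rw [dotC_sum_smul_right]
  have : ∀ j ∈ s, d j * dotC (u i) (u j) = if j = i then d i else 0 := by
    intro j hj
    rcases eq_or_ne j i with rfl | h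
    · simp [hON]
    · rw [hON i j, if_neg (fun hh => h hh.symm), if_neg h]; ring
  rw [Finset.sum_congr rfl this, Finset.sum_ite_eq' s i (fun _ => d i), if_pos hi]

lemma dotC_ON_sum {ι : Type*} [DecidableEq ι] {u : ι → V → ℂ}
    (hON : ∀ i j, dotC (u i) (u j) = if i = j then (1 : ℂ) else 0)
    (s : Finset ι) (c : ι → ℂ) (j : ι) :
    dotC (u j) (∑ i ∈ s, c i • u i) = if j ∈ s then c j else 0 := by
  rw [dotC_sum_smul_right]
  have : ∀ i ∈ s, c i * dotC (u j) (u i) = if i = j then c j else 0 := by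
    intro i hi
    rcases eq_or_ne i j with rfl | h
    · simp [hON]
    · rw [hON j i, if_neg (fun hh => h hh.symm), if_neg h]; ring
  rw [Finset.sum_congr rfl this, Finset.sum_ite_eq' s j (fun _ => c j)]

lemma ON_linearIndependent {ι : Type*} [Fintype ι] [DecidableEq ι] {u : ι → V → ℂ}
    (hON : ∀ i j, dotC (u i) (u j) = if i = j then (1 : ℂ) else 0) :
    LinearIndependent ℂ u := by
  rw [Fintype.linearIndependent_iff]
  intro c hc j
  have h := dotC_ON_sum hON Finset.univ c j
  rw [hc] at h
  have h0 : dotC (u j) 0 = 0 := by simp [dotC]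
  rw [h0] at h
  simpa using h.symm

end DotC

/-- A convenient notion of linearity for operators given as bare functions. -/
def IsLinOp {V : Type} (T : (V → ℂ) → (V → ℂ)) : Prop :=
  ∀ (c : ℂ) (f g : V → ℂ), T (c • f + g) = c • T f + T g

namespace IsLinOp

variable {V : Type} {T : (V → ℂ) → (V → ℂ)}

lemma map_zero (hT : IsLinOp T) : T 0 = 0 := by
  have h : T 0 = T 0 + T 0 := by simpa using hT 1 0 0
  simpa using h

lemma map_sum_smul (hT : IsLinOp T) {ι : Type*} (s : Finset ι) (c : ι → ℂ) (u : ι → V → ℂ) :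
    T (∑ i ∈ s, c i • u i) = ∑ i ∈ s, c i • T (u i) := by
  induction s using Finset.induction_on with
  | empty => simpa using hT.map_zero
  | insert _ _ hnot ih =>
      rw [Finset.sum_insert hnot, Finset.sum_insert hnot, hT, ih]

end IsLinOp

section Quad

variable {V : Type} [Fintype V]

lemma quad_eval {ι : Type*} [DecidableEq ι]
    {T : (V → ℂ) → (V → ℂ)} (hT : IsLinOp T) {u : ι → V → ℂ}
    (hON : ∀ i j, dotC (u i) (u j) = if i = j then (1:ℂ) else 0)
    {lam : ι → ℝ} (s : Finset ι)
    (heig : ∀ i ∈ s, T (u i) = fun v => ((lam i : ℝ) : ℂ) * u i v)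
    (c : ι → ℂ) {f : V → ℂ} (hf : f = ∑ i ∈ s, c i • u i) :
    (dotC f (T f)).re = ∑ i ∈ s, lam i * Complex.normSq (c i) ∧
      (dotC f f).re = ∑ i ∈ s, Complex.normSq (c i) := by
  subst hf
  constructor
  · rw [hT.map_sum_smul]
    have h1 : ∀ i ∈ s, c i • T (u i) = ((lam i : ℂ) * c i) • u i := by
      intro i hi
      rw [heig i hi]
      funext v
      simp only [Pi.smul_apply, smul_eq_mul]
      ring
    rw [Finset.sum_congr rfl h1, dotC_expand hON s c (fun i => (lam i : ℂ) * c i)]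
    have h2 : ∀ i ∈ s, (starRingEnd ℂ) (c i) * ((lam i : ℂ) * c i)
        = ((lam i * Complex.normSq (c i) : ℝ) : ℂ) := by
      intro i _
      rw [Complex.ofReal_mul, Complex.normSq_eq_conj_mul_self]
      ring
    rw [Finset.sum_congr rfl h2, ← Complex.ofReal_sum, Complex.ofReal_re]
  · rw [dotC_expand hON s c c]
    have h2 : ∀ i ∈ s, (starRingEnd ℂ) (c i) * c i = ((Complex.normSq (c i) : ℝ) : ℂ) := by
      intro i _
      rw [Complex.normSq_eq_conj_mul_self]
    rw [Finset.sum_congr rfl h2, ← Complex.ofReal_sum, Complex.ofReal_re]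

lemma weyl_upper {T1 T0 : (V → ℂ) → (V → ℂ)} (h1 : IsLinOp T1) (h0 : IsLinOp T0)
    {lam1 lam0 : Fin (Fintype.card V) → ℝ}
    (hE1 : IsEigList T1 lam1) (hE0 : IsEigList T0 lam0)
    {M : ℝ}
    (hX : ∀ f : V → ℂ, (dotC f (T1 f)).re - (dotC f (T0 f)).re ≤ M * (dotC f f).re)
    (n : Fin (Fintype.card V)) : lam1 n ≤ lam0 n + M := by
  obtain ⟨hmono1, u1, hON1, heig1⟩ := hE1
  obtain ⟨hmono0, u0, hON0, heig0⟩ := hE0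
  set A : Finset (Fin (Fintype.card V)) := Finset.univ.filter (fun i => n ≤ i) with hA
  set B : Finset (Fin (Fintype.card V)) := Finset.univ.filter (fun i => i ≤ n) with hB
  have hONA : ∀ i j : {i // i ∈ A}, dotC (u1 i) (u1 j) = if i = j then (1:ℂ) else 0 := by
    intro i j
    rw [hON1]
    by_cases h : i = j
    · simp [h]
    · rw [if_neg h, if_neg (fun hh => h (Subtype.ext hh))]
  have hONB : ∀ i j : {i // i ∈ B}, dotC (u0 i) (u0 j) = if i = j then (1:ℂ) else 0 := by
    intro i j
    rw [hON0]
    by_cases h : i = j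
    · simp [h]
    · rw [if_neg h, if_neg (fun hh => h (Subtype.ext hh))]
  set U := Submodule.span ℂ (Set.range (fun i : {i // i ∈ A} => u1 i)) with hU
  set W := Submodule.span ℂ (Set.range (fun i : {i // i ∈ B} => u0 i)) with hW
  have hrU : Module.finrank ℂ U = A.card := by
    rw [hU, finrank_span_eq_card (ON_linearIndependent hONA), Fintype.card_coe]
  have hrW : Module.finrank ℂ W = B.card := by
    rw [hW, finrank_span_eq_card (ON_linearIndependent hONB), Fintype.card_coe]
  have hcard : A.card + B.card = Fintype.card V + 1 := by
    have hun : A ∪ B = Finset.univ := by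
      ext i
      simp only [hA, hB, Finset.mem_union, Finset.mem_filter, Finset.mem_univ, true_and]
      exact iff_of_true (le_total n i) trivial
    have hint : A ∩ B = {n} := by
      ext i
      simp only [hA, hB, Finset.mem_inter, Finset.mem_filter, Finset.mem_univ, true_and,
        Finset.mem_singleton]
      constructor
      · rintro ⟨h1', h2'⟩; exact le_antisymm h2' h1'
      · rintro rfl; exact ⟨le_refl _, le_refl _⟩
    have := Finset.card_union_add_card_inter A B
    rw [hun, hint] at this
    simpa [Finset.card_univ] using this.symm
  have htot : Module.finrank ℂ (V → ℂ) = Fintype.card V := by simp [Module.finrank_pi]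
  have hsup : Module.finrank ℂ ↥(U ⊔ W) ≤ Fintype.card V := htot ▸ Submodule.finrank_le _
  have hinf : 0 < Module.finrank ℂ ↥(U ⊓ W) := by
    have h := Submodule.finrank_sup_add_finrank_inf_eq U W
    rw [hrU, hrW] at h
    omega
  have : Nontrivial ↥(U ⊓ W) := Module.finrank_pos_iff.mp hinf
  obtain ⟨x, hx⟩ := exists_ne (0 : ↥(U ⊓ W))
  set f : V → ℂ := ↑x with hfdef
  have hf0 : f ≠ 0 := fun h => hx (Subtype.ext h)
  have hfU : f ∈ U := x.2.1
  have hfW : f ∈ W := x.2.2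
  obtain ⟨c, hc⟩ := (Submodule.mem_span_range_iff_exists_fun ℂ).mp hfU
  obtain ⟨e, he⟩ := (Submodule.mem_span_range_iff_exists_fun ℂ).mp hfW
  have hq1 := quad_eval h1 hONA Finset.univ
    (fun i _ => heig1 i) c hc.symm
  have hq0 := quad_eval h0 hONB Finset.univ
    (fun i _ => heig0 i) e he.symm
  set r := (dotC f f).re with hr
  have hrpos : 0 < r := dotC_self_re_pos hf0
  have hlow : lam1 n * r ≤ (dotC f (T1 f)).re := by
    rw [hq1.1, hq1.2, Finset.mul_sum]
    refine Finset.sum_le_sum fun i _ => ?_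
    have : n ≤ (i : Fin (Fintype.card V)) := (Finset.mem_filter.mp i.2).2
    exact mul_le_mul_of_nonneg_right (hmono1 this) (Complex.normSq_nonneg _)
  have hhigh : (dotC f (T0 f)).re ≤ lam0 n * r := by
    rw [hq0.1, hq0.2, Finset.mul_sum]
    refine Finset.sum_le_sum fun j _ => ?_
    have : (j : Fin (Fintype.card V)) ≤ n := (Finset.mem_filter.mp j.2).2
    exact mul_le_mul_of_nonneg_right (hmono0 this) (Complex.normSq_nonneg _)
  have hXf := hX f
  have : lam1 n * r ≤ (lam0 n + M) * r := by nlinarith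
  exact le_of_mul_le_mul_right this hrpos

end Quad

set_option linter.unusedSectionVars false

section XOp

variable {V E : Type} [Fintype V] [Fintype E] {d : ℕ}

lemma fiberLap_linOp (o t : E → V) (m : E → Fin d → ℝ) (φ : E → ℝ) (θ : Fin d → ℝ)
    (Q : V → ℝ) :
    IsLinOp (fun f v => fiberLap o t m φ θ f v + (Q v : ℂ) * f v) := by
  intro c f g
  funext v
  have hsum : ∑ e ∈ Finset.univ.filter (fun e => o e = v),
      Complex.exp (Complex.I * ((φ e + ∑ i, m e i * θ i : ℝ) : ℂ)) * (c * f (t e) + g (t e))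
      = c * ∑ e ∈ Finset.univ.filter (fun e => o e = v),
          Complex.exp (Complex.I * ((φ e + ∑ i, m e i * θ i : ℝ) : ℂ)) * f (t e)
        + ∑ e ∈ Finset.univ.filter (fun e => o e = v),
          Complex.exp (Complex.I * ((φ e + ∑ i, m e i * θ i : ℝ) : ℂ)) * g (t e) := by
    rw [Finset.mul_sum, ← Finset.sum_add_distrib]
    refine Finset.sum_congr rfl fun e _ => ?_
    ring
  simp only [fiberLap, Pi.add_apply, Pi.smul_apply, smul_eq_mul]
  rw [hsum]
  ring

/-- The coefficient of the difference operator `X(θ)`. -/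
def Xc (m : E → Fin d → ℝ) (φ : E → ℝ) (θ : Fin d → ℝ) (e : E) : ℂ :=
  Complex.exp (Complex.I * ((∑ i, m e i * θ i : ℝ) : ℂ)) -
    Complex.exp (Complex.I * ((φ e + ∑ i, m e i * θ i : ℝ) : ℂ))

lemma fiberLap_sub (o t : E → V) (m : E → Fin d → ℝ) (φ : E → ℝ) (θ : Fin d → ℝ)
    (f : V → ℂ) (v : V) :
    fiberLap o t m φ θ f v - fiberLap o t m (fun _ => 0) θ f v
      = ∑ e ∈ Finset.univ.filter (fun e => o e = v), Xc m φ θ e * f (t e) := by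
  simp only [fiberLap, Xc, zero_add, sub_mul, Finset.sum_sub_distrib]
  ring

/-- The matrix of the difference operator `X(θ)`. -/
def Xmat (o t : E → V) (m : E → Fin d → ℝ) (φ : E → ℝ) (θ : Fin d → ℝ) : Matrix V V ℂ :=
  Matrix.of fun v w =>
    ∑ e ∈ Finset.univ.filter (fun e => o e = v ∧ t e = w), Xc m φ θ e

lemma Xmat_mulVec (o t : E → V) (m : E → Fin d → ℝ) (φ : E → ℝ) (θ : Fin d → ℝ)
    (f : V → ℂ) (v : V) :
    (Xmat o t m φ θ).mulVec f v
      = ∑ e ∈ Finset.univ.filter (fun e => o e = v), Xc m φ θ e * f (t e) := by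
  simp only [Matrix.mulVec, dotProduct, Xmat, Matrix.of_apply, Finset.sum_mul]
  have h1 : ∀ w : V, ∑ e ∈ Finset.univ.filter (fun e => o e = v ∧ t e = w), Xc m φ θ e * f w
      = ∑ e ∈ (Finset.univ.filter (fun e => o e = v)).filter (fun e => t e = w),
          Xc m φ θ e * f (t e) := by
    intro w
    rw [Finset.filter_filter]
    exact Finset.sum_congr rfl fun e he => by
      rw [(Finset.mem_filter.mp he).2.2]
  rw [Finset.sum_congr rfl fun w _ => h1 w]
  exact Finset.sum_fiberwise (Finset.univ.filter (fun e => o e = v)) t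
    (fun e => Xc m φ θ e * f (t e))

lemma Xc_inv (inv : E → E) (m : E → Fin d → ℝ) (hm : ∀ e, m (inv e) = - m e)
    (φ : E → ℝ) (hφ : ∀ e, φ (inv e) = - φ e) (θ : Fin d → ℝ) (e : E) :
    Xc m φ θ (inv e) = (starRingEnd ℂ) (Xc m φ θ e) := by
  simp only [Xc, hm, hφ, map_sub, Pi.neg_apply]
  rw [← Complex.exp_conj, ← Complex.exp_conj]
  congr 1
  · congr 1
    rw [map_mul, Complex.conj_I, Complex.conj_ofReal]
    have : ∑ i, -m e i * θ i = -(∑ i, m e i * θ i) := by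
      rw [← Finset.sum_neg_distrib]
      exact Finset.sum_congr rfl fun i _ => by ring
    rw [this]
    push_cast
    ring
  · congr 1
    rw [map_mul, Complex.conj_I, Complex.conj_ofReal]
    have : ∑ i, -m e i * θ i = -(∑ i, m e i * θ i) := by
      rw [← Finset.sum_neg_distrib]
      exact Finset.sum_congr rfl fun i _ => by ring
    rw [this]
    push_cast
    ring

lemma Xmat_isHermitian (o t : E → V) (inv : E → E)
    (hinv : ∀ e, inv (inv e) = e) (hoi : ∀ e, o (inv e) = t e) (hti : ∀ e, t (inv e) = o e)
    (m : E → Fin d → ℝ) (hm : ∀ e, m (inv e) = - m e)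
    (φ : E → ℝ) (hφ : ∀ e, φ (inv e) = - φ e) (θ : Fin d → ℝ) :
    (Xmat o t m φ θ).IsHermitian := by
  unfold Matrix.IsHermitian
  ext v w
  rw [Matrix.conjTranspose_apply]
  show star (Xmat o t m φ θ w v) = Xmat o t m φ θ v w
  simp only [Xmat, Matrix.of_apply]
  rw [star_sum]
  refine Finset.sum_nbij' (fun e => inv e) (fun e => inv e) ?_ ?_ ?_ ?_ ?_
  · intro e he
    simp only [Finset.mem_filter, Finset.mem_univ, true_and] at he ⊢
    exact ⟨(hoi e).trans he.2, (hti e).trans he.1⟩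
  · intro e he
    simp only [Finset.mem_filter, Finset.mem_univ, true_and] at he ⊢
    exact ⟨(hoi e).trans he.2, (hti e).trans he.1⟩
  · intro e _; exact hinv e
  · intro e _; exact hinv e
  · intro e _
    exact (Xc_inv inv m hm φ hφ θ e).symm

lemma abs_Xc_le (m : E → Fin d → ℝ) (φ : E → ℝ) (θ : Fin d → ℝ) (e : E) :
    ‖Xc m φ θ e‖ ≤ 2 := by
  have h1 : ∀ x : ℝ, ‖Complex.exp (Complex.I * (x : ℂ))‖ = 1 := by
    intro x
    exact Complex.norm_exp_I_mul_ofReal x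
  calc ‖Xc m φ θ e‖
      ≤ ‖Complex.exp (Complex.I * ((∑ i, m e i * θ i : ℝ) : ℂ))‖
        + ‖Complex.exp (Complex.I * ((φ e + ∑ i, m e i * θ i : ℝ) : ℂ))‖ := by
        exact norm_sub_le _ _
    _ ≤ 2 := by rw [h1, h1]; norm_num

end XOp

section Spectral

variable {V : Type} [Fintype V]

lemma mulVec_linOp (Xm : Matrix V V ℂ) : IsLinOp (fun f => Xm.mulVec f) := by
  intro c f g
  simp only []
  rw [Matrix.mulVec_add, Matrix.mulVec_smul]

lemma dotC_eq_inner (f g : EuclideanSpace ℂ V) : dotC (f : V → ℂ) g = inner ℂ f g := by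
  rw [PiLp.inner_apply]
  simp [dotC, RCLike.inner_apply, mul_comm]

lemma herm_eig_data [DecidableEq V] (Xm : Matrix V V ℂ) (hX : Xm.IsHermitian) :
    ∃ (g : V → V → ℂ) (μ : V → ℝ),
      (∀ k l, dotC (g k) (g l) = if k = l then (1:ℂ) else 0) ∧
      (∀ k, Xm.mulVec (g k) = fun v => ((μ k : ℝ) : ℂ) * g k v) ∧
      (∀ f : V → ℂ, ∃ c : V → ℂ, f = ∑ k, c k • g k) := by
  set b := hX.eigenvectorBasis with hb
  refine ⟨fun k => (b k : EuclideanSpace ℂ V), hX.eigenvalues, ?_, ?_, ?_⟩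
  · intro k l
    rw [dotC_eq_inner]
    exact orthonormal_iff_ite.mp b.orthonormal k l
  · intro k
    have h := hX.mulVec_eigenvectorBasis k
    funext v
    have h2 := congrFun h v
    simp only [Pi.smul_apply, Complex.real_smul] at h2
    exact h2
  · intro f
    refine ⟨fun k => b.repr (WithLp.toLp 2 f) k, ?_⟩
    have := congrArg WithLp.ofLp (b.sum_repr (WithLp.toLp 2 f))
    simpa using this.symm

end Spectral

section Bounds

variable {V E : Type} [Fintype V] [Fintype E] {d : ℕ}

lemma Xdiff_bound (o t : E → V) (m : E → Fin d → ℝ) (φ : E → ℝ) (θ : Fin d → ℝ)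
    {μ : ℝ} {f : V → ℂ} (hf : f ≠ 0)
    (h : ∀ v, fiberLap o t m φ θ f v - fiberLap o t m (fun _ => 0) θ f v = (μ : ℂ) * f v) :
    |μ| ≤ 2 * Fintype.card E := by
  have hne : ∃ v, f v ≠ 0 := by
    by_contra hc; push_neg at hc; exact hf (funext hc)
  obtain ⟨v1, hv1⟩ := hne
  obtain ⟨v0, _, hv0⟩ := Finset.exists_max_image Finset.univ (fun v => ‖f v‖)
    ⟨v1, Finset.mem_univ v1⟩
  have ha : 0 < ‖f v0‖ :=
    lt_of_lt_of_le (by simpa using hv1) (hv0 v1 (Finset.mem_univ v1))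
  have key : |μ| * ‖f v0‖ ≤ (2 * Fintype.card E) * ‖f v0‖ := by
    have h1 : (μ : ℂ) * f v0 = ∑ e ∈ Finset.univ.filter (fun e => o e = v0),
        Xc m φ θ e * f (t e) := by rw [← h v0, fiberLap_sub]
    calc |μ| * ‖f v0‖ = ‖(μ : ℂ) * f v0‖ := by
          rw [norm_mul, Complex.norm_real, Real.norm_eq_abs]
      _ = ‖∑ e ∈ Finset.univ.filter (fun e => o e = v0),
            Xc m φ θ e * f (t e)‖ := by rw [h1]
      _ ≤ ∑ e ∈ Finset.univ.filter (fun e => o e = v0),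
            ‖Xc m φ θ e * f (t e)‖ := norm_sum_le _ _
      _ ≤ ∑ e ∈ Finset.univ.filter (fun e => o e = v0), 2 * ‖f v0‖ := by
          refine Finset.sum_le_sum fun e _ => ?_
          rw [norm_mul]
          exact mul_le_mul (abs_Xc_le m φ θ e) (hv0 (t e) (Finset.mem_univ _))
            (norm_nonneg _) (by norm_num)
      _ = ((Finset.univ.filter (fun e => o e = v0)).card : ℝ) * (2 * ‖f v0‖) := by
          rw [Finset.sum_const, nsmul_eq_mul]
      _ ≤ (Fintype.card E : ℝ) * (2 * ‖f v0‖) := by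
          refine mul_le_mul_of_nonneg_right ?_ (by positivity)
          exact_mod_cast Finset.card_filter_le Finset.univ _
      _ = (2 * Fintype.card E) * ‖f v0‖ := by ring
  exact le_of_mul_le_mul_right key ha

lemma eigpair_bound (o t : E → V) (m : E → Fin d → ℝ) (φ : E → ℝ) (θ : Fin d → ℝ)
    (Q : V → ℝ) {lam : ℝ} {f : V → ℂ} (hf : f ≠ 0)
    (h : ∀ v, fiberLap o t m φ θ f v + (Q v : ℂ) * f v = (lam : ℂ) * f v) :
    |lam| ≤ 2 * Fintype.card E + ∑ v, |Q v| := by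
  have hne : ∃ v, f v ≠ 0 := by
    by_contra hc; push_neg at hc; exact hf (funext hc)
  obtain ⟨v1, hv1⟩ := hne
  obtain ⟨v0, _, hv0⟩ := Finset.exists_max_image Finset.univ (fun v => ‖f v‖)
    ⟨v1, Finset.mem_univ v1⟩
  have ha : 0 < ‖f v0‖ :=
    lt_of_lt_of_le (by simpa using hv1) (hv0 v1 (Finset.mem_univ v1))
  have hexp : ∀ x : ℝ, ‖Complex.exp (Complex.I * (x : ℂ))‖ = 1 := by
    intro x; exact Complex.norm_exp_I_mul_ofReal x
  have hQ : |Q v0| ≤ ∑ v, |Q v| :=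
    Finset.single_le_sum (fun v _ => abs_nonneg (Q v)) (Finset.mem_univ v0)
  have hdeg : ((mdeg o v0 : ℕ) : ℝ) ≤ (Fintype.card E : ℝ) := by
    exact_mod_cast Finset.card_filter_le Finset.univ _
  have key : |lam| * ‖f v0‖
      ≤ (2 * Fintype.card E + ∑ v, |Q v|) * ‖f v0‖ := by
    calc |lam| * ‖f v0‖ = ‖(lam : ℂ) * f v0‖ := by
          rw [norm_mul, Complex.norm_real, Real.norm_eq_abs]
      _ = ‖fiberLap o t m φ θ f v0 + (Q v0 : ℂ) * f v0‖ := by rw [h v0]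
      _ ≤ ‖fiberLap o t m φ θ f v0‖ + ‖(Q v0 : ℂ) * f v0‖ :=
          norm_add_le _ _
      _ ≤ ((mdeg o v0 : ℝ) * ‖f v0‖
            + (Fintype.card E : ℝ) * ‖f v0‖)
            + |Q v0| * ‖f v0‖ := by
          gcongr ?_ + ?_
          · rw [fiberLap]
            refine le_trans (norm_sub_le _ _) ?_
            gcongr ?_ + ?_
            · rw [norm_mul]
              simp [Complex.norm_natCast]
            · calc ‖∑ e ∈ Finset.univ.filter (fun e => o e = v0),
                    Complex.exp (Complex.I * ((φ e + ∑ i, m e i * θ i : ℝ) : ℂ)) * f (t e)‖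
                  ≤ ∑ e ∈ Finset.univ.filter (fun e => o e = v0),
                    ‖Complex.exp (Complex.I * ((φ e + ∑ i, m e i * θ i : ℝ) : ℂ))
                      * f (t e)‖ := norm_sum_le _ _
                _ ≤ ∑ _e ∈ Finset.univ.filter (fun e => o e = v0), ‖f v0‖ := by
                    refine Finset.sum_le_sum fun e _ => ?_
                    rw [norm_mul, hexp]
                    simpa using hv0 (t e) (Finset.mem_univ _)
                _ = ((Finset.univ.filter (fun e => o e = v0)).card : ℝ)
                      * ‖f v0‖ := by rw [Finset.sum_const, nsmul_eq_mul]
                _ ≤ (Fintype.card E : ℝ) * ‖f v0‖ := by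
                    refine mul_le_mul_of_nonneg_right ?_ (norm_nonneg _)
                    exact_mod_cast Finset.card_filter_le Finset.univ _
          · rw [norm_mul, Complex.norm_real, Real.norm_eq_abs]
      _ ≤ (Fintype.card E : ℝ) * ‖f v0‖
            + (Fintype.card E : ℝ) * ‖f v0‖
            + (∑ v, |Q v|) * ‖f v0‖ := by
          have h0 := norm_nonneg (f v0)
          nlinarith [mul_le_mul_of_nonneg_right hdeg h0, mul_le_mul_of_nonneg_right hQ h0]
      _ = (2 * Fintype.card E + ∑ v, |Q v|) * ‖f v0‖ := by ring
  exact le_of_mul_le_mul_right key ha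

end Bounds

/-- Variation of the band edges under a perturbation by a magnetic field:
`Λ₁ ≤ λ_{φ,n}^± − λ_{0,n}^± ≤ Λ_ν`, where `Λ₁` (resp. `Λ_ν`) is the infimum of
the smallest (resp. supremum of the largest) eigenvalue of
`X(θ) = Δ_{m,φ}(θ) − Δ_{m,0}(θ)` over `θ`. -/
theorem fiber_band_edge_variation
    {V E : Type} [Fintype V] [Fintype E] [Nonempty V] {d : ℕ}
    (o t : E → V) (inv : E → E)
    (hfp : ∀ e, inv e ≠ e) (hinv : ∀ e, inv (inv e) = e)
    (hoi : ∀ e, o (inv e) = t e) (hti : ∀ e, t (inv e) = o e)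
    (m : E → Fin d → ℝ) (hm : ∀ e, m (inv e) = - m e)
    (φ : E → ℝ) (hφ : ∀ e, φ (inv e) = - φ e)
    (Q : V → ℝ)
    (lamφ lam0 : (Fin d → ℝ) → Fin (Fintype.card V) → ℝ)
    (hlamφ : ∀ θ, IsEigList
      (fun f v => fiberLap o t m φ θ f v + (Q v : ℂ) * f v) (lamφ θ))
    (hlam0 : ∀ θ, IsEigList
      (fun f v => fiberLap o t m (fun _ => 0) θ f v + (Q v : ℂ) * f v) (lam0 θ))
    (Λ₁ Λν : ℝ)
    (hΛ₁ : Λ₁ = sInf {μ : ℝ | ∃ (θ : Fin d → ℝ) (f : V → ℂ), f ≠ 0 ∧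
      ∀ v, fiberLap o t m φ θ f v - fiberLap o t m (fun _ => 0) θ f v = (μ : ℂ) * f v})
    (hΛν : Λν = sSup {μ : ℝ | ∃ (θ : Fin d → ℝ) (f : V → ℂ), f ≠ 0 ∧
      ∀ v, fiberLap o t m φ θ f v - fiberLap o t m (fun _ => 0) θ f v = (μ : ℂ) * f v}) :
    ∀ n : Fin (Fintype.card V),
      (Λ₁ ≤ sSup (Set.range fun θ => lamφ θ n) - sSup (Set.range fun θ => lam0 θ n) ∧
        sSup (Set.range fun θ => lamφ θ n) - sSup (Set.range fun θ => lam0 θ n) ≤ Λν) ∧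
      (Λ₁ ≤ sInf (Set.range fun θ => lamφ θ n) - sInf (Set.range fun θ => lam0 θ n) ∧
        sInf (Set.range fun θ => lamφ θ n) - sInf (Set.range fun θ => lam0 θ n) ≤ Λν) := by
  intro n
  classical
  set S : Set ℝ := {μ : ℝ | ∃ (θ : Fin d → ℝ) (f : V → ℂ), f ≠ 0 ∧
      ∀ v, fiberLap o t m φ θ f v - fiberLap o t m (fun _ => 0) θ f v = (μ : ℂ) * f v} with hS
  have hSbddA : BddAbove S := by
    refine ⟨2 * Fintype.card E, fun μ hμ => ?_⟩
    obtain ⟨θ, f, hf, h⟩ := hμ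
    exact le_trans (le_abs_self μ) (Xdiff_bound o t m φ θ hf h)
  have hSbddB : BddBelow S := by
    refine ⟨-(2 * Fintype.card E), fun μ hμ => ?_⟩
    obtain ⟨θ, f, hf, h⟩ := hμ
    have := Xdiff_bound o t m φ θ hf h
    have h2 := neg_abs_le μ
    linarith
  -- the key per-fiber inequality
  have key : ∀ θ : Fin d → ℝ, Λ₁ ≤ lamφ θ n - lam0 θ n ∧ lamφ θ n - lam0 θ n ≤ Λν := by
    intro θ
    obtain ⟨g, μ, hONg, heigg, hspan⟩ := herm_eig_data (Xmat o t m φ θ)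
      (Xmat_isHermitian o t inv hinv hoi hti m hm φ hφ θ)
    have heig' : ∀ k v, fiberLap o t m φ θ (g k) v - fiberLap o t m (fun _ => 0) θ (g k) v
        = ((μ k : ℝ) : ℂ) * g k v := by
      intro k v
      rw [fiberLap_sub, ← Xmat_mulVec o t m φ θ (g k) v, heigg k]
    have hgne : ∀ k, g k ≠ 0 := by
      intro k hk
      have h1 := hONg k k
      rw [hk] at h1
      simp [dotC] at h1
    have hmem : ∀ k, μ k ∈ S := fun k => ⟨θ, g k, hgne k, fun v => heig' k v⟩
    have hVne : (Finset.univ : Finset V).Nonempty := Finset.univ_nonempty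
    set μmax := Finset.univ.sup' hVne μ with hμmax
    set μmin := Finset.univ.inf' hVne μ with hμmin
    have hμmaxS : μmax ∈ S := by
      obtain ⟨k, _, hk⟩ := Finset.exists_mem_eq_sup' hVne μ
      rw [hμmax, hk]; exact hmem k
    have hμminS : μmin ∈ S := by
      obtain ⟨k, _, hk⟩ := Finset.exists_mem_eq_inf' hVne μ
      rw [hμmin, hk]; exact hmem k
    have hT1lin := fiberLap_linOp o t m φ θ Q
    have hT0lin := fiberLap_linOp o t m (fun _ => 0) θ Q
    have hXlin := mulVec_linOp (Xmat o t m φ θ)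
    have hquad : ∀ f : V → ℂ,
        (dotC f (fun v => fiberLap o t m φ θ f v + (Q v : ℂ) * f v)).re
          - (dotC f (fun v => fiberLap o t m (fun _ => 0) θ f v + (Q v : ℂ) * f v)).re
          = (dotC f ((Xmat o t m φ θ).mulVec f)).re := by
      intro f
      rw [← Complex.sub_re, dotC_sub_right]
      have hptw : (fun v => (fiberLap o t m φ θ f v + (Q v : ℂ) * f v)
          - (fiberLap o t m (fun _ => 0) θ f v + (Q v : ℂ) * f v))
          = (Xmat o t m φ θ).mulVec f := by
        funext v
        rw [Xmat_mulVec, ← fiberLap_sub]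
        ring
      rw [hptw]
    have hbound : ∀ f : V → ℂ,
        μmin * (dotC f f).re ≤ (dotC f ((Xmat o t m φ θ).mulVec f)).re ∧
        (dotC f ((Xmat o t m φ θ).mulVec f)).re ≤ μmax * (dotC f f).re := by
      intro f
      obtain ⟨c, hc⟩ := hspan f
      obtain ⟨hq1, hq2⟩ := quad_eval hXlin hONg Finset.univ (fun k _ => heigg k) c hc
      rw [hq1, hq2]
      constructor
      · rw [Finset.mul_sum]
        exact Finset.sum_le_sum fun k _ =>
          mul_le_mul_of_nonneg_right (Finset.inf'_le _ (Finset.mem_univ k))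
            (Complex.normSq_nonneg _)
      · rw [Finset.mul_sum]
        exact Finset.sum_le_sum fun k _ =>
          mul_le_mul_of_nonneg_right (Finset.le_sup' _ (Finset.mem_univ k))
            (Complex.normSq_nonneg _)
    have hup : lamφ θ n ≤ lam0 θ n + μmax :=
      weyl_upper hT1lin hT0lin (hlamφ θ) (hlam0 θ)
        (fun f => by rw [hquad f]; exact (hbound f).2) n
    have hdown : lam0 θ n ≤ lamφ θ n + (-μmin) :=
      weyl_upper hT0lin hT1lin (hlam0 θ) (hlamφ θ)
        (fun f => by
          rw [neg_mul]
          have h1 := (hbound f).1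
          have h2 := hquad f
          linarith) n
    constructor
    · have h1 : Λ₁ ≤ μmin := by rw [hΛ₁]; exact csInf_le hSbddB hμminS
      linarith
    · have h2 : μmax ≤ Λν := by rw [hΛν]; exact le_csSup hSbddA hμmaxS
      linarith
  -- uniform bounds on the eigenvalue functions
  set C : ℝ := 2 * Fintype.card E + ∑ v, |Q v| with hC
  have hbddφ : ∀ (θ : Fin d → ℝ), |lamφ θ n| ≤ C := by
    intro θ
    obtain ⟨_, u, hON, heig⟩ := hlamφ θ
    have hfne : u n ≠ 0 := by
      intro h0
      have h1 := hON n n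
      rw [h0] at h1
      simp [dotC] at h1
    exact eigpair_bound o t m φ θ Q hfne (fun v => congrFun (heig n) v)
  have hbdd0 : ∀ (θ : Fin d → ℝ), |lam0 θ n| ≤ C := by
    intro θ
    obtain ⟨_, u, hON, heig⟩ := hlam0 θ
    have hfne : u n ≠ 0 := by
      intro h0
      have h1 := hON n n
      rw [h0] at h1
      simp [dotC] at h1
    exact eigpair_bound o t m (fun _ => 0) θ Q hfne (fun v => congrFun (heig n) v)
  have hRφA : BddAbove (Set.range fun θ => lamφ θ n) := by
    refine ⟨C, ?_⟩
    rintro a ⟨θ, rfl⟩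
    exact le_trans (le_abs_self _) (hbddφ θ)
  have hRφB : BddBelow (Set.range fun θ => lamφ θ n) := by
    refine ⟨-C, ?_⟩
    rintro a ⟨θ, rfl⟩
    have := hbddφ θ
    have h2 := neg_abs_le (lamφ θ n)
    linarith
  have hR0A : BddAbove (Set.range fun θ => lam0 θ n) := by
    refine ⟨C, ?_⟩
    rintro a ⟨θ, rfl⟩
    exact le_trans (le_abs_self _) (hbdd0 θ)
  have hR0B : BddBelow (Set.range fun θ => lam0 θ n) := by
    refine ⟨-C, ?_⟩
    rintro a ⟨θ, rfl⟩
    have := hbdd0 θ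
    have h2 := neg_abs_le (lam0 θ n)
    linarith
  have hne : Nonempty (Fin d → ℝ) := ⟨fun _ => 0⟩
  have hRφne : (Set.range fun θ => lamφ θ n).Nonempty := Set.range_nonempty _
  have hR0ne : (Set.range fun θ => lam0 θ n).Nonempty := Set.range_nonempty _
  refine ⟨⟨?_, ?_⟩, ⟨?_, ?_⟩⟩
  · -- Λ₁ ≤ sSup φ - sSup 0
    have h1 : sSup (Set.range fun θ => lam0 θ n)
        ≤ sSup (Set.range fun θ => lamφ θ n) - Λ₁ := by
      refine csSup_le hR0ne ?_
      rintro a ⟨θ, rfl⟩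
      have h2 := (key θ).1
      have h3 : lamφ θ n ≤ sSup (Set.range fun θ => lamφ θ n) :=
        le_csSup hRφA ⟨θ, rfl⟩
      linarith
    linarith
  · -- sSup φ - sSup 0 ≤ Λν
    have h1 : sSup (Set.range fun θ => lamφ θ n)
        ≤ sSup (Set.range fun θ => lam0 θ n) + Λν := by
      refine csSup_le hRφne ?_
      rintro a ⟨θ, rfl⟩
      have h2 := (key θ).2
      have h3 : lam0 θ n ≤ sSup (Set.range fun θ => lam0 θ n) :=
        le_csSup hR0A ⟨θ, rfl⟩
      linarith
    linarith
  · -- Λ₁ ≤ sInf φ - sInf 0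
    have h1 : sInf (Set.range fun θ => lam0 θ n) + Λ₁
        ≤ sInf (Set.range fun θ => lamφ θ n) := by
      refine le_csInf hRφne ?_
      rintro a ⟨θ, rfl⟩
      have h2 := (key θ).1
      have h3 : sInf (Set.range fun θ => lam0 θ n) ≤ lam0 θ n :=
        csInf_le hR0B ⟨θ, rfl⟩
      linarith
    linarith
  · -- sInf φ - sInf 0 ≤ Λν
    have h1 : sInf (Set.range fun θ => lamφ θ n) - Λν
        ≤ sInf (Set.range fun θ => lam0 θ n) := by
      refine le_csInf hR0ne ?_
      rintro a ⟨θ, rfl⟩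
      have h2 := (key θ).2
      have h3 : sInf (Set.range fun θ => lamφ θ n) ≤ lamφ θ n :=
        csInf_le hRφB ⟨θ, rfl⟩
      linarith
    linarith
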